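/- For positive integers k and m with 2^(m + ν₂(k)) > k, the smallest positive integer n such that 2^m divides the binomial coefficient C(n,k) is n = 2^(m + ν₂(k)), where ν₂ denotes the 2-adic valuation. -/

import Mathlib

/-- For positive integers `k` and `m` with `2 ^ (m + ν₂ k) > k`, the smallest integer
`n ≥ k` such that `2 ^ m` divides `C(n, k)` is `n = 2 ^ (m + ν₂ k)`. -/
theorem stmt0 (k m : ℕ) (hk : 0 < k) (hm : 0 < m)
    (h : k < 2 ^ (m + padicValNat 2 k)) :
    IsLeast {n : ℕ | k ≤ n ∧ 2 ^ m ∣ n.choose k} (2 ^ (m + padicValNat 2 k)) := by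
  have hp : Nat.Prime 2 := Nat.prime_two
  haveI : Fact (Nat.Prime 2) := ⟨hp⟩
  set v := padicValNat 2 k with hv
  constructor
  · refine ⟨h.le, ?_⟩
    have hmul : multiplicity 2 k = v := (padicValNat_def hk.ne').symm
    have he := hp.emultiplicity_choose_prime_pow (n := m + v) h.le hk.ne'
    rw [hmul, Nat.add_sub_cancel] at he
    rw [pow_dvd_iff_le_emultiplicity, he]
  · rintro n ⟨hkn, hdvd⟩
    set b := Nat.log 2 n + 1 with hb
    have hlog : Nat.log 2 n < b := Nat.lt_succ_self _
    have hchoose : 0 < n.choose k := Nat.choose_pos hkn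
    have hE := hp.emultiplicity_choose hkn hlog
    set S := {i ∈ Finset.Ico 1 b | 2 ^ i ≤ k % 2 ^ i + (n - k) % 2 ^ i} with hS
    have hmcard : m ≤ S.card := by
      have : (m : ℕ∞) ≤ emultiplicity 2 (n.choose k) :=
        pow_dvd_iff_le_emultiplicity.mp hdvd
      rw [hE] at this
      exact_mod_cast this
    -- every carry position is > v
    have hSv : ∀ i ∈ S, v + 1 ≤ i := by
      intro i hi
      by_contra hlt
      push_neg at hlt
      have hiv : i ≤ v := Nat.lt_succ_iff.mp hlt
      have hdk : 2 ^ i ∣ k :=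
        dvd_trans (pow_dvd_pow 2 hiv) (pow_padicValNat_dvd)
      simp only [hS, Finset.mem_filter] at hi
      have := hi.2
      rw [Nat.mod_eq_zero_of_dvd hdk, zero_add] at this
      exact absurd this (not_le.mpr (Nat.mod_lt _ (pow_pos two_pos i)))
    -- there is a carry at position ≥ v + m
    have hbig : ∃ i ∈ S, v + m ≤ i := by
      by_contra hc
      push_neg at hc
      have hsub : S ⊆ Finset.Ico (v + 1) (v + m) := by
        intro i hi
        exact Finset.mem_Ico.mpr ⟨hSv i hi, hc i hi⟩
      have := Finset.card_le_card hsub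
      rw [Nat.card_Ico] at this
      omega
    obtain ⟨i, hiS, hvi⟩ := hbig
    simp only [hS, Finset.mem_filter] at hiS
    calc 2 ^ (m + v) ≤ 2 ^ i := Nat.pow_le_pow_right two_pos (by omega)
      _ ≤ k % 2 ^ i + (n - k) % 2 ^ i := hiS.2
      _ ≤ k + (n - k) := Nat.add_le_add (Nat.mod_le _ _) (Nat.mod_le _ _)
      _ = n := Nat.add_sub_cancel' hkn
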